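/- Let G = (V,E) be a finite graph with complex edge weights v : E → ℂ, and define the matrix M over V by M_{xy} = Σ_{e joining x and y} |v(e)|^{1/2}. Then for every vertex x and integer m ≥ 0, the weighted number of connected subgraphs of G with m edges containing x, C_{•,m}(G,{v},x) = Σ_{connected subgraphs G'=(V',E') ⊆ G with x∈V', |E'|=m} Π_{e∈E'}|v(e)|, satisfies C_{•,m}(G,{v},x) ≤ (M^{2m})_{xx}. -/

import Mathlib

open scoped Classical

namespace Stmt17
variable {V E : Type*}

/-- `chain x₁ x₂ a L b`: the list of edges `L` forms a walk from `a` to `b`. -/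
def chain (x₁ x₂ : E → V) : V → List E → V → Prop
  | a, [], b => a = b
  | a, e :: L, b => (x₁ e = a ∧ chain x₁ x₂ (x₂ e) L b) ∨ (x₂ e = a ∧ chain x₁ x₂ (x₁ e) L b)

/-- Reachability from `a` to `b` using only edges in `S`. -/
def Reach (x₁ x₂ : E → V) (S : Finset E) (a b : V) : Prop :=
  ∃ L : List E, (∀ e ∈ L, e ∈ S) ∧ chain x₁ x₂ a L b

variable {x₁ x₂ : E → V} {S T : Finset E} {a b c : V}

lemma reach_refl : Reach x₁ x₂ S a a := ⟨[], by simp, rfl⟩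

lemma chain_append {L L' : List E} (h : chain x₁ x₂ a L b) (h' : chain x₁ x₂ b L' c) :
    chain x₁ x₂ a (L ++ L') c := by
  induction L generalizing a with
  | nil => cases h; simpa using h'
  | cons e L ih =>
    rcases h with ⟨he, hc⟩ | ⟨he, hc⟩
    · exact Or.inl ⟨he, ih hc⟩
    · exact Or.inr ⟨he, ih hc⟩

lemma chain_single {e : E} (h : (x₁ e = a ∧ x₂ e = b) ∨ (x₂ e = a ∧ x₁ e = b)) :
    chain x₁ x₂ a [e] b := by
  rcases h with ⟨h1, h2⟩ | ⟨h1, h2⟩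
  · exact Or.inl ⟨h1, h2⟩
  · exact Or.inr ⟨h1, h2⟩

lemma Reach.trans (h : Reach x₁ x₂ S a b) (h' : Reach x₁ x₂ S b c) : Reach x₁ x₂ S a c := by
  obtain ⟨L, hL, hc⟩ := h
  obtain ⟨L', hL', hc'⟩ := h'
  refine ⟨L ++ L', ?_, chain_append hc hc'⟩
  intro e he
  rcases List.mem_append.1 he with h | h
  exacts [hL e h, hL' e h]

lemma Reach.step (h : Reach x₁ x₂ S a b) {e : E} (he : e ∈ S)
    (hend : (x₁ e = b ∧ x₂ e = c) ∨ (x₂ e = b ∧ x₁ e = c)) : Reach x₁ x₂ S a c :=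
  h.trans ⟨[e], by simpa using he, chain_single hend⟩

/-- Every edge on a chain starting from an `x`-reachable vertex is `x`-reachable. -/
lemma chain_edges_reach {x : V} :
    ∀ (L : List E) (a b : V), (∀ e ∈ L, e ∈ S) → chain x₁ x₂ a L b →
      Reach x₁ x₂ S x a → ∀ g ∈ L, Reach x₁ x₂ S x (x₁ g) := by
  intro L
  induction L with
  | nil => intro a b _ _ _ g hg; simp at hg
  | cons e L ih =>
    intro a b hLS hc ha g hg
    have heS : e ∈ S := hLS e (by simp)
    rcases hc with ⟨he, hc⟩ | ⟨he, hc⟩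
    · rcases List.mem_cons.1 hg with rfl | hg
      · exact he ▸ ha
      · exact ih (x₂ e) b (fun f hf => hLS f (by simp [hf])) hc
          (ha.step heS (Or.inl ⟨he, rfl⟩)) g hg
    · rcases List.mem_cons.1 hg with rfl | hg
      · exact (ha.step heS (Or.inr ⟨he, rfl⟩))
      · exact ih (x₁ e) b (fun f hf => hLS f (by simp [hf])) hc
          (ha.step heS (Or.inr ⟨he, rfl⟩)) g hg

/-- Key lemma for the non-`x`-component: walking in `insert e₀ E''` from a vertex reachable
from `x` (within `E''`) or from `y` (within `B`), any vertex not reachable from `x` within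
`E''` that we hit is reachable from `y` within `B`. -/
lemma chain_B {E'' B : Finset E} {x y : V} {e₀ : E}
    (he₀ : (x₁ e₀ = x ∧ x₂ e₀ = y) ∨ (x₂ e₀ = x ∧ x₁ e₀ = y))
    (hBdef : ∀ g ∈ E'', g ∉ B →
      Reach x₁ x₂ E'' x (x₁ g) ∧ Reach x₁ x₂ E'' x (x₂ g)) :
    ∀ (L : List E) (c w : V), (∀ e ∈ L, e ∈ insert e₀ E'') → chain x₁ x₂ c L w →
      (Reach x₁ x₂ E'' x c ∨ Reach x₁ x₂ B y c) → ¬ Reach x₁ x₂ E'' x w →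
      Reach x₁ x₂ B y w := by
  intro L
  induction L with
  | nil =>
    intro c w _ hc hd hw
    cases hc
    rcases hd with h | h
    · exact absurd h hw
    · exact h
  | cons g L ih =>
    intro c w hLS hc hd hw
    -- figure out the next vertex `n` and the step disjunct
    obtain ⟨n, hstep, hcn⟩ : ∃ n, ((x₁ g = c ∧ x₂ g = n) ∨ (x₂ g = c ∧ x₁ g = n)) ∧
        chain x₁ x₂ n L w := by
      rcases hc with ⟨he, hcc⟩ | ⟨he, hcc⟩
      · exact ⟨x₂ g, Or.inl ⟨he, rfl⟩, hcc⟩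
      · exact ⟨x₁ g, Or.inr ⟨he, rfl⟩, hcc⟩
    have hLS' : ∀ e ∈ L, e ∈ insert e₀ E'' := fun f hf => hLS f (by simp [hf])
    rcases Finset.mem_insert.1 (hLS g (by simp)) with rfl | hgE
    · -- g = e₀ : next vertex is x or y
      have hn : n = x ∨ n = y := by
        rcases he₀ with ⟨h1, h2⟩ | ⟨h1, h2⟩ <;> rcases hstep with ⟨_, h4⟩ | ⟨_, h4⟩ <;>
          [exact Or.inr (h4.symm.trans h2); exact Or.inl (h4.symm.trans h1);
           exact Or.inl (h4.symm.trans h1); exact Or.inr (h4.symm.trans h2)]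
      rcases hn with rfl | rfl
      · exact ih n w hLS' hcn (Or.inl reach_refl) hw
      · exact ih n w hLS' hcn (Or.inr reach_refl) hw
    · by_cases hgB : g ∈ B
      · -- g ∈ B
        rcases hd with hxc | hyc
        · -- c reachable from x within E'': so is n
          have : Reach x₁ x₂ E'' x n := hxc.step hgE (by tauto)
          exact ih n w hLS' hcn (Or.inl this) hw
        · have : Reach x₁ x₂ B y n := hyc.step hgB (by tauto)
          exact ih n w hLS' hcn (Or.inr this) hw
      · -- g ∉ B : both endpoints of g are x-reachable in E''
        obtain ⟨h1, h2⟩ := hBdef g hgE hgB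
        have hn : Reach x₁ x₂ E'' x n := by
          rcases hstep with ⟨_, h4⟩ | ⟨_, h4⟩
          · exact h4 ▸ h2
          · exact h4 ▸ h1
        exact ih n w hLS' hcn (Or.inl hn) hw

lemma exists_closed_walk (x₁ x₂ : E → V) [DecidableEq V] :
    ∀ (n : ℕ) (E' : Finset E) (x : V), E'.card ≤ n →
    (∀ f ∈ E', Reach x₁ x₂ E' x (x₁ f)) →
    ∃ L : List E, chain x₁ x₂ x L x ∧ ∀ e, L.count e = if e ∈ E' then 2 else 0 := by
  intro n
  induction n with
  | zero =>
    intro E' x hcard _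
    have : E' = ∅ := Finset.card_eq_zero.1 (Nat.le_zero.1 hcard)
    subst this
    exact ⟨[], rfl, by simp⟩
  | succ n ih =>
    intro E' x hcard hconn
    rcases eq_or_ne E' ∅ with rfl | hne
    · exact ⟨[], rfl, by simp⟩
    · obtain ⟨f₀, hf₀⟩ := Finset.nonempty_iff_ne_empty.2 hne
      -- find an edge incident to x
      obtain ⟨e₀, he₀E, hxinc⟩ : ∃ e₀ ∈ E', x₁ e₀ = x ∨ x₂ e₀ = x := by
        obtain ⟨L, hLS, hch⟩ := hconn f₀ hf₀
        cases L with
        | nil => exact ⟨f₀, hf₀, Or.inl hch.symm⟩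
        | cons g L' =>
          rcases hch with ⟨hg, _⟩ | ⟨hg, _⟩
          · exact ⟨g, hLS g (by simp), Or.inl hg⟩
          · exact ⟨g, hLS g (by simp), Or.inr hg⟩
      set y : V := if x₁ e₀ = x then x₂ e₀ else x₁ e₀ with hy
      have he₀ : (x₁ e₀ = x ∧ x₂ e₀ = y) ∨ (x₂ e₀ = x ∧ x₁ e₀ = y) := by
        by_cases h : x₁ e₀ = x
        · exact Or.inl ⟨h, by simp [hy, h]⟩
        · exact Or.inr ⟨hxinc.resolve_left h, by simp [hy, h]⟩
      set E'' : Finset E := E'.erase e₀ with hE''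
      have hins : insert e₀ E'' = E' := Finset.insert_erase he₀E
      set A : Finset E := E''.filter (fun f => Reach x₁ x₂ E'' x (x₁ f)) with hA
      set B : Finset E := E'' \ A with hB
      -- A is connected to x within A
      have hAconn : ∀ f ∈ A, Reach x₁ x₂ A x (x₁ f) := by
        intro f hf
        obtain ⟨L, hLS, hch⟩ := (Finset.mem_filter.1 hf).2
        refine ⟨L, fun g hg => ?_, hch⟩
        exact Finset.mem_filter.2 ⟨hLS g hg,
          chain_edges_reach L x (x₁ f) hLS hch reach_refl g hg⟩
      -- B is connected to y within B
      have hBdef : ∀ g ∈ E'', g ∉ B →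
          Reach x₁ x₂ E'' x (x₁ g) ∧ Reach x₁ x₂ E'' x (x₂ g) := by
        intro g hg hgB
        have hgA : g ∈ A := by
          by_contra hgA
          exact hgB (Finset.mem_sdiff.2 ⟨hg, hgA⟩)
        have h1 := (Finset.mem_filter.1 hgA).2
        exact ⟨h1, h1.step hg (Or.inl ⟨rfl, rfl⟩)⟩
      have hBconn : ∀ f ∈ B, Reach x₁ x₂ B y (x₁ f) := by
        intro f hf
        obtain ⟨hfE, hfA⟩ := Finset.mem_sdiff.1 hf
        have hnr : ¬ Reach x₁ x₂ E'' x (x₁ f) := fun h =>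
          hfA (Finset.mem_filter.2 ⟨hfE, h⟩)
        obtain ⟨L, hLS, hch⟩ := hconn f (hins ▸ Finset.mem_insert_of_mem hfE)
        exact chain_B he₀ hBdef L x (x₁ f) (fun e he => hins ▸ hLS e he) hch
          (Or.inl reach_refl) hnr
      -- cardinalities
      have hcard' : E''.card = E'.card - 1 := Finset.card_erase_of_mem he₀E
      have hpos : 1 ≤ E'.card := Finset.card_pos.2 ⟨f₀, hf₀⟩
      have hAle : A.card ≤ n := le_trans (Finset.card_le_card (Finset.filter_subset _ _))
        (by omega)
      have hBle : B.card ≤ n := le_trans (Finset.card_le_card (Finset.sdiff_subset))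
        (by omega)
      obtain ⟨LA, hLAc, hLAcount⟩ := ih A x hAle hAconn
      obtain ⟨LB, hLBc, hLBcount⟩ := ih B y hBle hBconn
      refine ⟨LA ++ e₀ :: (LB ++ [e₀]), ?_, ?_⟩
      · refine chain_append hLAc ?_
        rcases he₀ with ⟨h1, h2⟩ | ⟨h1, h2⟩
        · exact Or.inl ⟨h1, h2 ▸ chain_append hLBc (chain_single (Or.inr ⟨h2, h1⟩))⟩
        · exact Or.inr ⟨h1, h2 ▸ chain_append hLBc (chain_single (Or.inl ⟨h2, h1⟩))⟩
      · intro e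
        have he₀A : e₀ ∉ A := fun h =>
          Finset.notMem_erase e₀ E' (hE'' ▸ Finset.mem_filter.1 h).1
        have he₀B : e₀ ∉ B := fun h => Finset.notMem_erase e₀ E' (Finset.mem_sdiff.1 h).1
        simp only [List.count_append, List.count_cons, List.count_singleton,
          hLAcount, hLBcount]
        rcases eq_or_ne e e₀ with rfl | hee
        · simp [he₀A, he₀B, he₀E]
        · have hAB : ¬ (e ∈ A ∧ e ∈ B) := by
            rintro ⟨h1, h2⟩
            exact (Finset.mem_sdiff.1 h2).2 h1
          have hmem : e ∈ E' ↔ e ∈ A ∨ e ∈ B := by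
            constructor
            · intro h
              have hE : e ∈ E'' := Finset.mem_erase.2 ⟨hee, h⟩
              by_cases hA' : e ∈ A
              · exact Or.inl hA'
              · exact Or.inr (Finset.mem_sdiff.2 ⟨hE, hA'⟩)
            · intro h
              rcases h with h | h
              · exact Finset.mem_erase.1 (Finset.mem_filter.1 h).1 |>.2
              · exact Finset.mem_erase.1 (Finset.mem_sdiff.1 h).1 |>.2
          have hee' : ¬ e₀ = e := fun h => hee h.symm
          by_cases hA' : e ∈ A <;> by_cases hB' : e ∈ B <;>
            simp [hA', hB', hee', hmem, beq_iff_eq] <;> exact hAB ⟨hA', hB'⟩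
      
lemma pow_apply [Fintype V] [Fintype E] [DecidableEq V] (x₁ x₂ : E → V) (v : E → ℂ) :
    ∀ (n : ℕ) (a b : V),
    (((Matrix.of fun a b : V =>
        ∑ e ∈ Finset.univ.filter (fun e =>
            (x₁ e = a ∧ x₂ e = b) ∨ (x₁ e = b ∧ x₂ e = a)),
          Real.sqrt (‖v e‖)) : Matrix V V ℝ) ^ n) a b
    = ∑ s : Fin n → E, if chain x₁ x₂ a (List.ofFn s) b then
        ∏ i, Real.sqrt (‖v (s i)‖) else 0 := by
  intro n
  induction n with
  | zero =>
    intro a b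
    rw [pow_zero, Matrix.one_apply]
    rw [Fintype.sum_unique]
    simp only [List.ofFn_zero, Finset.univ_eq_empty, Finset.prod_empty]
    exact if_congr Iff.rfl rfl rfl
  | succ n ih =>
    intro a b
    rw [pow_succ', Matrix.mul_apply]
    -- RHS: reindex by (e, s)
    rw [← (Fin.consEquiv (fun _ : Fin (n + 1) => E)).sum_comp]
    rw [Fintype.sum_prod_type]
    simp only [Fin.consEquiv_apply]
    have hofn : ∀ (e : E) (s : Fin n → E),
        List.ofFn (Fin.cons e s : Fin (n+1) → E) = e :: List.ofFn s := by
      intro e s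
      rw [List.ofFn_succ]
      simp [Fin.cons_zero, Fin.cons_succ]
    have hprod : ∀ (e : E) (s : Fin n → E),
        (∏ i : Fin (n+1), Real.sqrt (‖v ((Fin.cons e s : Fin (n+1) → E) i)‖))
        = Real.sqrt (‖v e‖) * ∏ i, Real.sqrt (‖v (s i)‖) := by
      intro e s
      rw [Fin.prod_univ_succ]
      simp [Fin.cons_zero, Fin.cons_succ]
    calc (∑ c : V, (Matrix.of fun a b : V =>
        ∑ e ∈ Finset.univ.filter (fun e =>
            (x₁ e = a ∧ x₂ e = b) ∨ (x₁ e = b ∧ x₂ e = a)),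
          Real.sqrt (‖v e‖)) a c *
          (((Matrix.of fun a b : V =>
        ∑ e ∈ Finset.univ.filter (fun e =>
            (x₁ e = a ∧ x₂ e = b) ∨ (x₁ e = b ∧ x₂ e = a)),
          Real.sqrt (‖v e‖)) : Matrix V V ℝ) ^ n) c b)
        = ∑ c : V, ∑ e : E, if (x₁ e = a ∧ x₂ e = c) ∨ (x₁ e = c ∧ x₂ e = a) then
            Real.sqrt (‖v e‖) *
            (∑ s : Fin n → E, if chain x₁ x₂ c (List.ofFn s) b then
              ∏ i, Real.sqrt (‖v (s i)‖) else 0) else 0 := by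
          refine Finset.sum_congr rfl fun c _ => ?_
          rw [Matrix.of_apply, Finset.sum_filter, Finset.sum_mul]
          refine Finset.sum_congr rfl fun e _ => ?_
          rw [ih]
          split <;> simp
      _ = ∑ e : E, ∑ c : V, if (x₁ e = a ∧ x₂ e = c) ∨ (x₁ e = c ∧ x₂ e = a) then
            Real.sqrt (‖v e‖) *
            (∑ s : Fin n → E, if chain x₁ x₂ c (List.ofFn s) b then
              ∏ i, Real.sqrt (‖v (s i)‖) else 0) else 0 :=
          Finset.sum_comm
      _ = ∑ e : E, ∑ s : Fin n → E,
            if chain x₁ x₂ a (List.ofFn (Fin.cons e s : Fin (n+1) → E)) b then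
              ∏ i : Fin (n+1), Real.sqrt (‖v ((Fin.cons e s : Fin (n+1) → E) i)‖) else 0 := by
          refine Finset.sum_congr rfl fun e _ => ?_
          have huc : ∀ s : Fin n → E,
              (if chain x₁ x₂ a (List.ofFn (Fin.cons e s : Fin (n+1) → E)) b then
                ∏ i : Fin (n+1), Real.sqrt (‖v ((Fin.cons e s : Fin (n+1) → E) i)‖) else 0)
              = if (x₁ e = a ∧ chain x₁ x₂ (x₂ e) (List.ofFn s) b) ∨
                  (x₂ e = a ∧ chain x₁ x₂ (x₁ e) (List.ofFn s) b) then
                Real.sqrt (‖v e‖) *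
                  ∏ i, Real.sqrt (‖v (s i)‖) else 0 := by
            intro s
            rw [hofn, hprod]
            exact if_congr Iff.rfl rfl rfl
          rw [Finset.sum_congr rfl fun s _ => huc s]
          by_cases h1 : x₁ e = a
          · by_cases h2 : x₂ e = a
            · -- self loop at a
              have h12 : x₁ e = x₂ e := h1.trans h2.symm
              have : ∀ c : V, ((x₁ e = a ∧ x₂ e = c) ∨ (x₁ e = c ∧ x₂ e = a)) ↔ c = x₂ e := by
                intro c
                constructor
                · rintro (⟨-, h⟩ | ⟨h, -⟩)
                  · exact h.symm
                  · exact (h12 ▸ h).symm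
                · rintro rfl
                  exact Or.inl ⟨h1, rfl⟩
              rw [Finset.sum_congr rfl fun c _ => if_congr (this c) rfl rfl]
              rw [Finset.sum_ite_eq' Finset.univ (x₂ e)
                (fun c => Real.sqrt (‖v e‖) *
                  (∑ s : Fin n → E, if chain x₁ x₂ c (List.ofFn s) b then
                    ∏ i, Real.sqrt (‖v (s i)‖) else 0))]
              simp only [Finset.mem_univ, if_true]
              rw [Finset.mul_sum]
              refine Finset.sum_congr rfl fun s _ => ?_
              have : ((x₁ e = a ∧ chain x₁ x₂ (x₂ e) (List.ofFn s) b) ∨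
                  (x₂ e = a ∧ chain x₁ x₂ (x₁ e) (List.ofFn s) b)) ↔
                  chain x₁ x₂ (x₂ e) (List.ofFn s) b := by
                constructor
                · rintro (⟨-, h⟩ | ⟨-, h⟩)
                  · exact h
                  · exact h12 ▸ h
                · intro h
                  exact Or.inl ⟨h1, h⟩
              rw [if_congr this rfl rfl]
              split <;> simp
            · -- x₁ e = a, x₂ e ≠ a
              have : ∀ c : V, ((x₁ e = a ∧ x₂ e = c) ∨ (x₁ e = c ∧ x₂ e = a)) ↔ c = x₂ e := by
                intro c
                constructor
                · rintro (⟨-, h⟩ | ⟨-, h⟩)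
                  · exact h.symm
                  · exact absurd h h2
                · rintro rfl
                  exact Or.inl ⟨h1, rfl⟩
              rw [Finset.sum_congr rfl fun c _ => if_congr (this c) rfl rfl]
              rw [Finset.sum_ite_eq' Finset.univ (x₂ e)
                (fun c => Real.sqrt (‖v e‖) *
                  (∑ s : Fin n → E, if chain x₁ x₂ c (List.ofFn s) b then
                    ∏ i, Real.sqrt (‖v (s i)‖) else 0))]
              simp only [Finset.mem_univ, if_true]
              rw [Finset.mul_sum]
              refine Finset.sum_congr rfl fun s _ => ?_
              have : ((x₁ e = a ∧ chain x₁ x₂ (x₂ e) (List.ofFn s) b) ∨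
                  (x₂ e = a ∧ chain x₁ x₂ (x₁ e) (List.ofFn s) b)) ↔
                  chain x₁ x₂ (x₂ e) (List.ofFn s) b := by
                constructor
                · rintro (⟨-, h⟩ | ⟨h, -⟩)
                  · exact h
                  · exact absurd h h2
                · intro h
                  exact Or.inl ⟨h1, h⟩
              rw [if_congr this rfl rfl]
              split <;> simp
          · by_cases h2 : x₂ e = a
            · -- x₂ e = a, x₁ e ≠ a
              have : ∀ c : V, ((x₁ e = a ∧ x₂ e = c) ∨ (x₁ e = c ∧ x₂ e = a)) ↔ c = x₁ e := by
                intro c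
                constructor
                · rintro (⟨h, -⟩ | ⟨h, -⟩)
                  · exact absurd h h1
                  · exact h.symm
                · rintro rfl
                  exact Or.inr ⟨rfl, h2⟩
              rw [Finset.sum_congr rfl fun c _ => if_congr (this c) rfl rfl]
              rw [Finset.sum_ite_eq' Finset.univ (x₁ e)
                (fun c => Real.sqrt (‖v e‖) *
                  (∑ s : Fin n → E, if chain x₁ x₂ c (List.ofFn s) b then
                    ∏ i, Real.sqrt (‖v (s i)‖) else 0))]
              simp only [Finset.mem_univ, if_true]
              rw [Finset.mul_sum]
              refine Finset.sum_congr rfl fun s _ => ?_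
              have : ((x₁ e = a ∧ chain x₁ x₂ (x₂ e) (List.ofFn s) b) ∨
                  (x₂ e = a ∧ chain x₁ x₂ (x₁ e) (List.ofFn s) b)) ↔
                  chain x₁ x₂ (x₁ e) (List.ofFn s) b := by
                constructor
                · rintro (⟨h, -⟩ | ⟨-, h⟩)
                  · exact absurd h h1
                  · exact h
                · intro h
                  exact Or.inr ⟨h2, h⟩
              rw [if_congr this rfl rfl]
              split <;> simp
            · -- neither
              have hc : ∀ c : V, ¬ ((x₁ e = a ∧ x₂ e = c) ∨ (x₁ e = c ∧ x₂ e = a)) := by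
                rintro c (⟨h, -⟩ | ⟨-, h⟩)
                · exact h1 h
                · exact h2 h
              have hs : ∀ s : Fin n → E, ¬ ((x₁ e = a ∧ chain x₁ x₂ (x₂ e) (List.ofFn s) b) ∨
                  (x₂ e = a ∧ chain x₁ x₂ (x₁ e) (List.ofFn s) b)) := by
                rintro s (⟨h, -⟩ | ⟨h, -⟩)
                · exact h1 h
                · exact h2 h
              simp [hc, hs]

lemma reach_of_reachable {x₁ x₂ : E → V} {E' : Finset E} {a b : V}
    (h : (SimpleGraph.fromRel (fun a b =>
      ∃ e ∈ E', (x₁ e = a ∧ x₂ e = b) ∨ (x₁ e = b ∧ x₂ e = a))).Reachable a b) :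
    Reach x₁ x₂ E' a b := by
  obtain ⟨w⟩ := h
  induction w with
  | nil => exact reach_refl
  | @cons u c w hadj p ih =>
    obtain ⟨-, hr⟩ := (SimpleGraph.fromRel_adj _ u c).1 hadj
    have step : Reach x₁ x₂ E' u c := by
      rcases hr with ⟨e, he, ⟨h1, h2⟩ | ⟨h1, h2⟩⟩ | ⟨e, he, ⟨h1, h2⟩ | ⟨h1, h2⟩⟩
      · exact ⟨[e], by simpa using he, chain_single (Or.inl ⟨h1, h2⟩)⟩
      · exact ⟨[e], by simpa using he, chain_single (Or.inr ⟨h2, h1⟩)⟩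
      · exact ⟨[e], by simpa using he, chain_single (Or.inr ⟨h2, h1⟩)⟩
      · exact ⟨[e], by simpa using he, chain_single (Or.inl ⟨h1, h2⟩)⟩
    exact step.trans ih

end Stmt17

open Stmt17

/-- Walk bound of Campanino et al.: the weighted sum over connected `m`-edge subgraphs
containing `x` of a finite (multi)graph (edges `E` with endpoint maps `x₁, x₂`) is
bounded by the diagonal entry `(M^{2m})_{xx}` of the matrix `M_{ab} = ∑_{e : a~b} |v_e|^{1/2}`.
A connected subgraph containing `x` is encoded by its edge set `E'`, its vertex set being
`{x}` together with the endpoints of edges of `E'`. -/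
theorem stmt_17 {V E : Type*} [Fintype V] [Fintype E] [DecidableEq V]
    (x₁ x₂ : E → V) (v : E → ℂ) (x : V) (m : ℕ) :
    (∑ E' ∈ (Finset.univ : Finset (Finset E)).filter (fun E' =>
        E'.card = m ∧
        ∀ a : V, (a = x ∨ ∃ e ∈ E', x₁ e = a ∨ x₂ e = a) →
          (SimpleGraph.fromRel (fun a b =>
            ∃ e ∈ E', (x₁ e = a ∧ x₂ e = b) ∨ (x₁ e = b ∧ x₂ e = a))).Reachable x a),
      ∏ e ∈ E', ‖v e‖) ≤
    (((Matrix.of fun a b : V =>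
        ∑ e ∈ Finset.univ.filter (fun e =>
            (x₁ e = a ∧ x₂ e = b) ∨ (x₁ e = b ∧ x₂ e = a)),
          Real.sqrt (‖v e‖)) : Matrix V V ℝ) ^ (2 * m)) x x := by
  classical
  set F := (Finset.univ : Finset (Finset E)).filter (fun E' =>
        E'.card = m ∧
        ∀ a : V, (a = x ∨ ∃ e ∈ E', x₁ e = a ∨ x₂ e = a) →
          (SimpleGraph.fromRel (fun a b =>
            ∃ e ∈ E', (x₁ e = a ∧ x₂ e = b) ∨ (x₁ e = b ∧ x₂ e = a))).Reachable x a) with hF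
  rw [pow_apply x₁ x₂ v (2 * m) x x]
  have spec : ∀ E' ∈ F, ∃ s : Fin (2 * m) → E, (List.ofFn s).toFinset = E' ∧
      (if chain x₁ x₂ x (List.ofFn s) x then
        ∏ i, Real.sqrt (‖v (s i)‖) else 0) = ∏ e ∈ E', ‖v e‖ := by
    intro E' hE'
    rw [hF, Finset.mem_filter] at hE'
    obtain ⟨-, hcard, hconn⟩ := hE'
    have hreach : ∀ f ∈ E', Reach x₁ x₂ E' x (x₁ f) := by
      intro f hf
      exact reach_of_reachable (hconn (x₁ f) (Or.inr ⟨f, hf, Or.inl rfl⟩))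
    obtain ⟨L, hch, hcount⟩ := exists_closed_walk x₁ x₂ E'.card E' x le_rfl hreach
    have htf : L.toFinset = E' := by
      ext e
      rw [List.mem_toFinset, ← List.count_pos_iff, hcount e]
      by_cases h : e ∈ E' <;> simp [h]
    have hlen : L.length = 2 * m := by
      have h1 := List.sum_toFinset_count_eq_length L
      rw [htf] at h1
      have h2 : ∑ a ∈ E', L.count a = ∑ _a ∈ E', 2 :=
        Finset.sum_congr rfl fun a ha => by rw [hcount a, if_pos ha]
      rw [h2, Finset.sum_const, smul_eq_mul, hcard] at h1
      omega
    refine ⟨fun i => L.get (Fin.cast hlen.symm i), ?_, ?_⟩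
    · have hofn : List.ofFn (fun i : Fin (2 * m) => L.get (Fin.cast hlen.symm i)) = L := by
        apply List.ext_getElem
        · simp [hlen]
        · intro i h1 h2
          simp [List.getElem_ofFn]
      rw [hofn, htf]
    · have hofn : List.ofFn (fun i : Fin (2 * m) => L.get (Fin.cast hlen.symm i)) = L := by
        apply List.ext_getElem
        · simp [hlen]
        · intro i h1 h2
          simp [List.getElem_ofFn]
      rw [hofn, if_pos hch]
      have hp : (∏ i : Fin (2 * m),
          Real.sqrt (‖v (L.get (Fin.cast hlen.symm i))‖))
          = (L.map fun e => Real.sqrt (‖v e‖)).prod := by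
        rw [← List.prod_ofFn]
        conv_rhs => rw [← hofn, List.map_ofFn]
        rfl
      rw [hp, Finset.prod_list_map_count, htf]
      refine Finset.prod_congr rfl fun e he => ?_
      rw [hcount e, if_pos he]
      exact Real.sq_sqrt (norm_nonneg _)
  -- assemble via injection into sequences
  set h : (Fin (2 * m) → E) → ℝ := fun s =>
    if chain x₁ x₂ x (List.ofFn s) x then
      ∏ i, Real.sqrt (‖v (s i)‖) else 0 with hh
  have hnonneg : ∀ s, 0 ≤ h s := by
    intro s
    rw [hh]
    dsimp only
    split
    · exact Finset.prod_nonneg fun i _ => Real.sqrt_nonneg _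
    · exact le_refl 0
  set Φ : {E' // E' ∈ F} → (Fin (2 * m) → E) := fun p => (spec p.1 p.2).choose with hΦ
  have hΦ1 : ∀ p : {E' // E' ∈ F}, (List.ofFn (Φ p)).toFinset = p.1 :=
    fun p => (spec p.1 p.2).choose_spec.1
  have hΦ2 : ∀ p : {E' // E' ∈ F}, h (Φ p) = ∏ e ∈ p.1, ‖v e‖ :=
    fun p => (spec p.1 p.2).choose_spec.2
  calc (∑ E' ∈ F, ∏ e ∈ E', ‖v e‖)
      = ∑ p ∈ F.attach, ∏ e ∈ p.1, ‖v e‖ := (Finset.sum_attach _ _).symm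
    _ = ∑ p ∈ F.attach, h (Φ p) := Finset.sum_congr rfl fun p _ => (hΦ2 p).symm
    _ = ∑ s ∈ F.attach.image Φ, h s := by
        rw [Finset.sum_image]
        intro p _ q _ hpq
        have : p.1 = q.1 := by rw [← hΦ1 p, ← hΦ1 q, hpq]
        exact Subtype.ext this
    _ ≤ ∑ s : Fin (2 * m) → E, h s :=
        Finset.sum_le_sum_of_subset_of_nonneg (Finset.subset_univ _)
          (fun s _ _ => hnonneg s)
    _ = ∑ s : Fin (2 * m) → E, if chain x₁ x₂ x (List.ofFn s) x then
          ∏ i, Real.sqrt (‖v (s i)‖) else 0 := rfl
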